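/- Let n and m be powers of two with n ≥ m ≥ 2, and let x be a natural number such that n + m - 1 = x^2. Then (n, m, x) = (8, 2, 3). -/

import Mathlib

theorem pow_two_add_pow_two_sub_one_sq (n m x : ℕ) (hn : ∃ k : ℕ, n = 2 ^ k)
    (hm : ∃ k : ℕ, m = 2 ^ k) (hnm : m ≤ n) (hm2 : 2 ≤ m)
    (h : n + m - 1 = x ^ 2) :
    (n, m, x) = (8, 2, 3) := by
  obtain ⟨a, rfl⟩ := hn
  obtain ⟨b, rfl⟩ := hm
  have hb1 : 1 ≤ b := by
    by_contra hb; push_neg at hb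
    interval_cases b <;> simp_all
  have hba : b ≤ a := (Nat.pow_le_pow_iff_right (by norm_num)).mp hnm
  have ha1 : 1 ≤ a := le_trans hb1 hba
  have h1a : 1 ≤ 2^a := Nat.one_le_two_pow
  -- rule out b ≥ 2
  have hb : b = 1 := by
    by_contra hb'
    have hb2 : 2 ≤ b := by omega
    have ha2 : 2 ≤ a := le_trans hb2 hba
    have h4a : (4:ℕ) ∣ 2^a := by
      have h : (2:ℕ)^2 ∣ 2^a := pow_dvd_pow 2 ha2
      simpa using h
    have h4b : (4:ℕ) ∣ 2^b := by
      have h : (2:ℕ)^2 ∣ 2^b := pow_dvd_pow 2 hb2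
      simpa using h
    have hx : x^2 + 1 = 2^a + 2^b := by omega
    have h4 : (4:ℕ) ∣ x^2 + 1 := hx ▸ dvd_add h4a h4b
    rcases Nat.even_or_odd x with ⟨c, rfl⟩ | ⟨c, rfl⟩
    · have he : (c+c)^2 = 4*c^2 := by ring
      rw [he] at h4
      omega
    · have he : (2*c+1)^2 = 4*(c^2+c) + 1 := by ring
      rw [he] at h4
      omega
  subst hb
  have hx2 : x^2 = 2^a + 1 := by
    norm_num at h
    omega
  rcases Nat.even_or_odd x with ⟨c, rfl⟩ | ⟨c, rfl⟩
  · exfalso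
    have he : (c+c)^2 = 2*(2*c^2) := by ring
    rw [he] at hx2
    have h2 : (2:ℕ) ∣ 2^a := dvd_pow_self 2 (by omega)
    omega
  · have he : (2*c+1)^2 = 4*(c*(c+1)) + 1 := by ring
    rw [he] at hx2
    have key : 4*(c*(c+1)) = 2^a := by omega
    have ha2 : 2 ≤ a := by
      by_contra ha'
      interval_cases a <;> omega
    have hpow : 2^a = 4 * 2^(a-2) := by
      have : a = 2 + (a - 2) := by omega
      rw [this, pow_add]; norm_num
    have hct : c*(c+1) = 2^(a-2) := by omega
    have hpos : 0 < 2^(a-2) := Nat.pow_pos (by norm_num)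
    rcases Nat.even_or_odd c with hc | hc
    · -- c even, c+1 odd divides 2^(a-2) so c+1 = 1, c = 0, contradiction
      have hdvd : (c+1) ∣ 2^(a-2) := ⟨c, by rw [← hct]; ring⟩
      have hcop : Nat.Coprime (c+1) 2 := by
        rw [Nat.coprime_two_right]
        exact Even.add_one hc
      have h1 := (hcop.pow_right _).eq_one_of_dvd hdvd
      have hc0 : c = 0 := by omega
      subst hc0
      simp at hct
      omega
    · -- c odd divides 2^(a-2) so c = 1, then 2^(a-2) = 2, a = 3
      have hdvd : c ∣ 2^(a-2) := ⟨c+1, by rw [← hct]⟩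
      have hcop : Nat.Coprime c 2 := by
        rw [Nat.coprime_two_right]; exact hc
      have hc1 : c = 1 := (hcop.pow_right _).eq_one_of_dvd hdvd
      subst hc1
      have h2 : 2^(a-2) = 2^1 := by omega
      have ha3 : a = 3 := by
        have := Nat.pow_right_injective (le_refl 2) h2
        omega
      subst ha3
      norm_num
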